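/- Boundedness of meandering tip trajectories off resonance: let c : ℝ → ℝ² and ω : ℝ → ℝ be continuous and T-periodic for some T > 0, let θ, R solve dθ/dt = ω(t), dR/dt = exp(τθ(t))·c(t), and set Θ = ∫₀ᵀ ω(s)ds. If Θ is not an integer multiple of 2π, then the trajectory R is bounded: there exist p ∈ ℝ² and M ≥ 0 with ‖R(t) − p‖ ≤ M for all t ∈ ℝ. -/

import Mathlib

open Matrix Real intervalIntegral

/-- The 2×2 real matrix τ = [[0,-1],[1,0]], so that exp(τθ) is rotation by angle θ. -/
noncomputable def tau : Matrix (Fin 2) (Fin 2) ℝ := !![0, -1; 1, 0]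


lemma tau_sq : tau * tau = -1 := by
  ext i j
  fin_cases i <;> fin_cases j <;> simp [tau, Matrix.mul_apply, Fin.sum_univ_two]

noncomputable def phiL : ℂ →ₗ[ℝ] Matrix (Fin 2) (Fin 2) ℝ :=
  Complex.reLm.smulRight (1 : Matrix (Fin 2) (Fin 2) ℝ) + Complex.imLm.smulRight tau

noncomputable def phi : ℂ →ₐ[ℝ] Matrix (Fin 2) (Fin 2) ℝ :=
  AlgHom.ofLinearMap phiL
    (by simp [phiL])
    (by
      intro a b
      simp only [phiL, LinearMap.add_apply, LinearMap.smulRight_apply, Complex.reLm_coe,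
        Complex.imLm_coe, Complex.mul_re, Complex.mul_im]
      simp only [add_mul, mul_add, smul_mul_smul_comm, tau_sq, one_mul, mul_one]
      match_scalars <;> ring)

lemma exp_tau_smul (x : ℝ) :
    NormedSpace.exp (x • tau) = Real.cos x • 1 + Real.sin x • tau := by
  letI : SeminormedRing (Matrix (Fin 2) (Fin 2) ℝ) := Matrix.linftyOpSemiNormedRing
  letI : NormedRing (Matrix (Fin 2) (Fin 2) ℝ) := Matrix.linftyOpNormedRing
  letI : NormedAlgebra ℝ (Matrix (Fin 2) (Fin 2) ℝ) := Matrix.linftyOpNormedAlgebra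
  have hphi : x • tau = phi (x • Complex.I) := by
    simp [phi, phiL]
  erw [hphi, ← NormedSpace.map_exp phi (phi.toLinearMap.continuous_of_finiteDimensional)]
  have : NormedSpace.exp (x • Complex.I) = Complex.exp (x * Complex.I) := by
    rw [Complex.exp_eq_exp_ℂ]
    norm_num [Complex.real_smul]
  rw [this, Complex.exp_mul_I]
  simp [phi, phiL, Complex.cos_ofReal_re, Complex.sin_ofReal_re]

/-- Boundedness of meandering tip trajectories off resonance: if c and ω are continuous and
T-periodic, θ' = ω(t), R' = exp(τθ(t))c(t), and the net rotation Θ = ∫₀ᵀ ω is not an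
integer multiple of 2π, then the tip trajectory R is bounded. -/
theorem tip_trajectory_bounded_off_resonance
    (T : ℝ) (hT : 0 < T)
    (c : ℝ → EuclideanSpace ℝ (Fin 2)) (ω : ℝ → ℝ)
    (hc_cont : Continuous c) (hω_cont : Continuous ω)
    (hc_per : Function.Periodic c T) (hω_per : Function.Periodic ω T)
    (θ : ℝ → ℝ) (R : ℝ → EuclideanSpace ℝ (Fin 2))
    (hθ : ∀ t, HasDerivAt θ (ω t) t)
    (hR : ∀ t, HasDerivAt R (Matrix.toEuclideanLin (NormedSpace.exp (θ t • tau)) (c t)) t)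
    (hΘ : ∀ k : ℤ, (∫ s in (0:ℝ)..T, ω s) ≠ k * (2 * π)) :
    ∃ (p : EuclideanSpace ℝ (Fin 2)) (M : ℝ), 0 ≤ M ∧ ∀ t : ℝ, ‖R t - p‖ ≤ M := by
  set Θ : ℝ := ∫ s in (0:ℝ)..T, ω s with hΘdef
  -- Step A : θ (t + T) = θ t + Θ
  have hθadd : ∀ t, θ (t + T) = θ t + Θ := by
    intro t
    have h1 : ∫ s in t..(t + T), ω s = Θ := by
      rw [hΘdef]
      simpa using hω_per.intervalIntegral_add_eq t 0
    have h2 : ∫ s in t..(t + T), ω s = θ (t + T) - θ t :=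
      intervalIntegral.integral_eq_sub_of_hasDerivAt (fun s _ => hθ s)
        (hω_cont.intervalIntegrable _ _)
    rw [h1] at h2
    linarith
  -- The rotation matrix and its linear map
  set A : Matrix (Fin 2) (Fin 2) ℝ := NormedSpace.exp (Θ • tau) with hAdef
  set L : EuclideanSpace ℝ (Fin 2) →L[ℝ] EuclideanSpace ℝ (Fin 2) :=
    LinearMap.toContinuousLinearMap (Matrix.toEuclideanLin A) with hLdef
  have hLapp : ∀ v, L v = Matrix.toEuclideanLin A v := fun v => rfl
  -- Step B : R (t + T) = L (R t) + b
  have hsplit : ∀ x v, Matrix.toEuclideanLin (NormedSpace.exp ((Θ + x) • tau)) v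
      = L (Matrix.toEuclideanLin (NormedSpace.exp (x • tau)) v) := by
    intro x v
    rw [add_smul, Matrix.exp_add_of_commute (Θ • tau) (x • tau) (((Commute.refl tau).smul_left Θ).smul_right x)]
    rw [hLapp, hAdef, Matrix.toEuclideanLin_eq_toLin, Matrix.toLin_mul _ (PiLp.basisFun 2 ℝ (Fin 2)) _]
    rfl
  have hderiv0 : ∀ t, HasDerivAt (fun t => R (t + T) - L (R t)) 0 t := by
    intro t
    have d1 : HasDerivAt (fun t => R (t + T))
        (Matrix.toEuclideanLin (NormedSpace.exp (θ (t + T) • tau)) (c (t + T))) t :=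
      HasDerivAt.comp_add_const t T (hR (t + T))
    have d2 : HasDerivAt (fun t => L (R t))
        (L (Matrix.toEuclideanLin (NormedSpace.exp (θ t • tau)) (c t))) t :=
      L.hasFDerivAt.comp_hasDerivAt t (hR t)
    have := d1.sub d2
    have e : Matrix.toEuclideanLin (NormedSpace.exp (θ (t + T) • tau)) (c (t + T))
        - L (Matrix.toEuclideanLin (NormedSpace.exp (θ t • tau)) (c t)) = 0 := by
      rw [hc_per t, hθadd t, add_comm (θ t) Θ, hsplit (θ t) (c t), sub_self]
    rwa [e] at this
  have hconst : ∀ t, R (t + T) - L (R t) = R (0 + T) - L (R 0) := by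
    intro t
    exact is_const_of_deriv_eq_zero (fun s => (hderiv0 s).differentiableAt)
      (fun s => (hderiv0 s).deriv) t 0
  set b : EuclideanSpace ℝ (Fin 2) := R (0 + T) - L (R 0) with hbdef
  have hkey : ∀ t, R (t + T) = L (R t) + b := by
    intro t
    rw [← hconst t]
    abel
  -- Step C : rotation facts and the fixed point
  have hAform : A = Real.cos Θ • 1 + Real.sin Θ • tau := exp_tau_smul Θ
  have hLcoord : ∀ v : EuclideanSpace ℝ (Fin 2),
      L v 0 = Real.cos Θ * v 0 - Real.sin Θ * v 1 ∧
      L v 1 = Real.sin Θ * v 0 + Real.cos Θ * v 1 := by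
    intro v
    rw [hLapp, hAform]
    constructor <;>
    · simp [Matrix.toEuclideanLin_apply, Matrix.mulVec, dotProduct, Fin.sum_univ_two,
        tau, Matrix.smul_apply, Matrix.one_apply]
      ring
  have hiso : ∀ v : EuclideanSpace ℝ (Fin 2), ‖L v‖ = ‖v‖ := by
    intro v
    obtain ⟨h0, h1⟩ := hLcoord v
    rw [EuclideanSpace.norm_eq, EuclideanSpace.norm_eq]
    congr 1
    simp only [Fin.sum_univ_two, Real.norm_eq_abs, sq_abs, h0, h1]
    linear_combination (v 0 ^ 2 + v 1 ^ 2) * Real.sin_sq_add_cos_sq Θ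
  have hca : Real.cos Θ ≠ 1 := by
    intro h
    obtain ⟨n, hn⟩ := (Real.cos_eq_one_iff Θ).mp h
    exact hΘ n hn.symm
  have hdpos : (0:ℝ) < (1 - Real.cos Θ) ^ 2 + Real.sin Θ ^ 2 := by
    have h1 : Real.cos Θ ≤ 1 := Real.cos_le_one Θ
    have h2 : Real.cos Θ < 1 := lt_of_le_of_ne h1 hca
    nlinarith
  set d : ℝ := (1 - Real.cos Θ) ^ 2 + Real.sin Θ ^ 2 with hddef
  set p : EuclideanSpace ℝ (Fin 2) := (WithLp.equiv 2 (Fin 2 → ℝ)).symm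
    ![((1 - Real.cos Θ) * b 0 - Real.sin Θ * b 1) / d,
      (Real.sin Θ * b 0 + (1 - Real.cos Θ) * b 1) / d] with hpdef
  have hp0 : p 0 = ((1 - Real.cos Θ) * b 0 - Real.sin Θ * b 1) / d := rfl
  have hp1 : p 1 = (Real.sin Θ * b 0 + (1 - Real.cos Θ) * b 1) / d := rfl
  have hfix : L p + b = p := by
    have hd := ne_of_gt hdpos
    ext i
    fin_cases i
    · show (L p + b) 0 = p 0
      rw [PiLp.add_apply, (hLcoord p).1, hp0, hp1]
      field_simp
      ring
    · show (L p + b) 1 = p 1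
      rw [PiLp.add_apply, (hLcoord p).2, hp0, hp1]
      field_simp
      ring
  -- Step D : periodicity of the distance to p, and boundedness
  have hb2 : b = p - L p := eq_sub_of_add_eq' hfix
  have hper : ∀ t, ‖R (t + T) - p‖ = ‖R t - p‖ := by
    intro t
    have he : R (t + T) - p = L (R t - p) := by
      rw [hkey t, map_sub, hb2]
      abel
    rw [he, hiso]
  have hRcont : Continuous R := continuous_iff_continuousAt.mpr fun t => (hR t).continuousAt
  have hfcont : Continuous fun t => ‖R t - p‖ := (hRcont.sub continuous_const).norm
  have hfper : Function.Periodic (fun t => ‖R t - p‖) T := hper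
  obtain ⟨x0, hx0, hmax⟩ := isCompact_Icc.exists_isMaxOn
    (Set.nonempty_Icc.mpr hT.le) hfcont.continuousOn
  refine ⟨p, ‖R x0 - p‖, norm_nonneg _, fun t => ?_⟩
  obtain ⟨y, hy, hty⟩ := hfper.exists_mem_Ico₀ hT t
  rw [show ‖R t - p‖ = ‖R y - p‖ from hty]
  exact hmax (Set.mem_Icc_of_Ico hy)
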